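/- (Strassen's commutator lower bound, as used in the paper.) Let A be a finite-dimensional complex vector space, let b ≥ 1, and let T ∈ A ⊗ ℂ^b ⊗ ℂ^b, regarded as a linear map φ: A* → Mat_{b×b}(ℂ). Suppose there exists α0 ∈ A* with φ(α0) invertible. Then for all α1, α2 ∈ A*, setting X1 = φ(α1)·φ(α0)^{−1} and X2 = φ(α2)·φ(α0)^{−1}, the border rank of T satisfies R̲(T) ≥ b + (1/2)·rank(X1·X2 − X2·X1). -/

import Mathlib

/-- A simple (rank-one) tensor in coordinates: `(u ⊗ v ⊗ w)_{ijk} = u_i v_j w_k`. -/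
def simpleTensor {ι₁ ι₂ ι₃ : Type} (u : ι₁ → ℂ) (v : ι₂ → ℂ) (w : ι₃ → ℂ) :
    ι₁ → ι₂ → ι₃ → ℂ :=
  fun i j k => u i * v j * w k

/-- The set of tensors of rank at most `r`: sums of `r` simple tensors. -/
def rankAtMost (ι₁ ι₂ ι₃ : Type) (r : ℕ) : Set (ι₁ → ι₂ → ι₃ → ℂ) :=
  {T | ∃ u : Fin r → ι₁ → ℂ, ∃ v : Fin r → ι₂ → ℂ, ∃ w : Fin r → ι₃ → ℂ,
    T = ∑ s : Fin r, simpleTensor (u s) (v s) (w s)}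

/-- The border rank of a tensor: the least `r` such that `T` lies in the closure of the
set of tensors of rank at most `r`. -/
noncomputable def borderRank {ι₁ ι₂ ι₃ : Type} (T : ι₁ → ι₂ → ι₃ → ℂ) : ℕ :=
  sInf {r : ℕ | T ∈ closure (rankAtMost ι₁ ι₂ ι₃ r)}

/-- The matrix multiplication tensor `M_{⟨n,m,p⟩} = ∑ x^i_j ⊗ y^j_k ⊗ z^k_i`
in coordinates: the first factor is indexed by pairs `(i,j)`, the second by `(j,k)`,
the third by `(k,i)`. -/
def matMulTensor (n m p : ℕ) :
    (Fin n × Fin m) → (Fin m × Fin p) → (Fin p × Fin n) → ℂ :=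
  fun x y z => if x.2 = y.1 ∧ y.2 = z.1 ∧ z.2 = x.1 then 1 else 0

/-- The BCLRS tensor `T_{BCLRS,m} = M_{⟨m,2,2⟩} − x^1_1 ⊗ (y^1_1 ⊗ z^1_1 + y^1_2 ⊗ z^2_1)`
(indices written 1-based in the literature, 0-based here). -/
def TBCLRS (m : ℕ) : (Fin m × Fin 2) → (Fin 2 × Fin 2) → (Fin 2 × Fin m) → ℂ :=
  fun x y z =>
    matMulTensor m 2 2 x y z -
      (if x.1.val = 0 ∧ x.2.val = 0 then 1 else 0) *
        ((if y.1.val = 0 ∧ y.2.val = 0 then 1 else 0) *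
            (if z.1.val = 0 ∧ z.2.val = 0 then 1 else 0) +
          (if y.1.val = 0 ∧ y.2.val = 1 then 1 else 0) *
            (if z.1.val = 1 ∧ z.2.val = 0 then 1 else 0))


set_option maxHeartbeats 1000000

open Matrix

namespace StrassenAux

variable {n m r b : ℕ}

variable {n m r b : ℕ}

lemma rank_add_le (A B : Matrix (Fin n) (Fin m) ℂ) :
    (A + B).rank ≤ A.rank + B.rank := by
  have hle : LinearMap.range (A + B).mulVecLin ≤
      LinearMap.range A.mulVecLin ⊔ LinearMap.range B.mulVecLin := by
    rintro x ⟨y, rfl⟩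
    rw [Matrix.mulVecLin_add]
    exact Submodule.add_mem_sup (LinearMap.mem_range_self _ y) (LinearMap.mem_range_self _ y)
  exact le_trans (Submodule.finrank_mono hle)
    (Submodule.finrank_add_le_finrank_add_finrank _ _)

lemma rank_neg (A : Matrix (Fin n) (Fin m) ℂ) : (-A).rank = A.rank := by
  have h : (-A).mulVecLin = -A.mulVecLin := by
    ext x
    simp [Matrix.neg_mulVec]
  rw [Matrix.rank, Matrix.rank, h, LinearMap.range_neg]

lemma rank_sub_le (A B : Matrix (Fin n) (Fin m) ℂ) : (A - B).rank ≤ A.rank + B.rank := by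
  calc (A - B).rank = (A + -B).rank := by rw [sub_eq_add_neg]
    _ ≤ A.rank + (-B).rank := rank_add_le _ _
    _ = A.rank + B.rank := by rw [rank_neg]

lemma rank_add_of_orth {A B : Matrix (Fin r) (Fin r) ℂ} (hA : A * A = A) (hB : B * B = B)
    (hAB : A * B = 0) (hBA : B * A = 0) :
    A.rank + B.rank ≤ (A + B).rank := by
  have hU : LinearMap.range A.mulVecLin ≤ LinearMap.range (A + B).mulVecLin := by
    rintro x ⟨y, rfl⟩
    refine ⟨A.mulVec y, ?_⟩
    simp only [Matrix.mulVecLin_apply, Matrix.mulVec_mulVec, Matrix.add_mul, hA, hBA, add_zero]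
  have hW : LinearMap.range B.mulVecLin ≤ LinearMap.range (A + B).mulVecLin := by
    rintro x ⟨y, rfl⟩
    refine ⟨B.mulVec y, ?_⟩
    simp only [Matrix.mulVecLin_apply, Matrix.mulVec_mulVec, Matrix.add_mul, hB, hAB, zero_add]
  have hinf : LinearMap.range A.mulVecLin ⊓ LinearMap.range B.mulVecLin = ⊥ := by
    rw [Submodule.eq_bot_iff]
    rintro x ⟨⟨y, hy⟩, ⟨z, hz⟩⟩
    have h1 : A.mulVec x = x := by
      rw [← hy]; simp only [Matrix.mulVecLin_apply, Matrix.mulVec_mulVec, hA]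
    have h2 : A.mulVec x = 0 := by
      rw [← hz]; simp only [Matrix.mulVecLin_apply, Matrix.mulVec_mulVec, hAB,
        Matrix.zero_mulVec]
    rw [← h1, h2]
  have hsup := Submodule.finrank_sup_add_finrank_inf_eq
    (LinearMap.range A.mulVecLin) (LinearMap.range B.mulVecLin)
  rw [hinf, finrank_bot, add_zero] at hsup
  have hfin := Submodule.finrank_mono (sup_le hU hW)
  rw [hsup] at hfin
  exact hfin

lemma rank_one_sub_add_rank_le {P : Matrix (Fin r) (Fin r) ℂ} (hP : P * P = P) :
    (1 - P).rank + P.rank ≤ r := by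
  have h : (1 - P) * P = 0 := by rw [sub_mul, one_mul, hP, sub_self]
  simpa using Matrix.rank_add_rank_le_card_of_mul_eq_zero h

lemma rank_smul {c : ℂ} (hc : c ≠ 0) (M : Matrix (Fin n) (Fin n) ℂ) :
    (c • M).rank = M.rank := by
  have h1 : c • M = (c • (1 : Matrix (Fin n) (Fin n) ℂ)) * M := by
    rw [Matrix.smul_mul, one_mul]
  have h2 : IsUnit ((c • (1 : Matrix (Fin n) (Fin n) ℂ)).det) := by
    rw [Matrix.det_smul, Matrix.det_one, mul_one]
    exact (isUnit_iff_ne_zero).mpr (pow_ne_zero _ hc)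
  rw [h1, Matrix.rank_mul_eq_right_of_isUnit_det _ _ h2]


variable {n m r b : ℕ}

/-- Core algebraic form of Strassen's commutator bound. -/
lemma core {b r : ℕ} (V : Matrix (Fin b) (Fin r) ℂ) (C : Matrix (Fin r) (Fin b) ℂ)
    (E D1 D2 : Matrix (Fin r) (Fin r) ℂ)
    (hEE : E * E = E) (h1 : E * D1 = D1 * E) (h2 : E * D2 = D2 * E)
    (h12 : D1 * D2 = D2 * D1) (hnorm : V * E * C = 1) :
    ((V * D1 * C) * (V * D2 * C) - (V * D2 * C) * (V * D1 * C)).rank + 2 * b ≤ 2 * r := by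
  obtain ⟨Vt, hVt⟩ : ∃ M, M = V * E := ⟨_, rfl⟩
  obtain ⟨Ct, hCt⟩ : ∃ M, M = E * C := ⟨_, rfl⟩
  have hVC : Vt * Ct = 1 := by
    rw [hVt, hCt, show V * E * (E * C) = V * (E * E) * C by simp only [Matrix.mul_assoc],
      hEE]; exact hnorm
  obtain ⟨P, hP⟩ : ∃ M, M = Ct * Vt := ⟨_, rfl⟩
  have hPP : P * P = P := by
    rw [hP, show Ct * Vt * (Ct * Vt) = Ct * (Vt * Ct) * Vt by simp only [Matrix.mul_assoc],
      hVC, Matrix.mul_one]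
  have hVP : Vt * P = Vt := by
    rw [hP, show Vt * (Ct * Vt) = (Vt * Ct) * Vt by simp only [Matrix.mul_assoc], hVC,
      Matrix.one_mul]
  have hPC : P * Ct = Ct := by
    rw [hP, show Ct * Vt * Ct = Ct * (Vt * Ct) by simp only [Matrix.mul_assoc], hVC,
      Matrix.mul_one]
  have hEP : E * P = P := by
    rw [hP, hCt, show E * (E * C * Vt) = (E * E) * C * Vt by simp only [Matrix.mul_assoc], hEE]
  have hPE : P * E = P := by
    rw [hP, hVt, show Ct * (V * E) * E = Ct * (V * (E * E)) by
      simp only [Matrix.mul_assoc], hEE]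
  -- idempotents and orthogonality
  have hQ1 : (E - P) * (E - P) = E - P := by
    have expand : (E - P) * (E - P) = E * E - E * P - P * E + P * P := by noncomm_ring
    rw [expand, hEE, hEP, hPE, hPP]; abel
  have hQ2 : ((1 : Matrix (Fin r) (Fin r) ℂ) - E) * (1 - E) = 1 - E := by
    have expand : ((1 : Matrix (Fin r) (Fin r) ℂ) - E) * (1 - E) = 1 - E - E + E * E := by
      noncomm_ring
    rw [expand, hEE]; abel
  have horth1 : (E - P) * ((1 : Matrix (Fin r) (Fin r) ℂ) - E) = 0 := by
    have expand : (E - P) * ((1 : Matrix (Fin r) (Fin r) ℂ) - E) = E - E * E - P + P * E := by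
      noncomm_ring
    rw [expand, hEE, hPE]; abel
  have horth2 : ((1 : Matrix (Fin r) (Fin r) ℂ) - E) * (E - P) = 0 := by
    have expand : ((1 : Matrix (Fin r) (Fin r) ℂ) - E) * (E - P) = E - P - E * E + E * P := by
      noncomm_ring
    rw [expand, hEE, hEP]; abel
  -- rank of P is at least b
  have hPb : b ≤ P.rank := by
    have hVPC : Vt * P * Ct = 1 := by rw [Matrix.mul_assoc, hPC, hVC]
    have h1b : ((1 : Matrix (Fin b) (Fin b) ℂ)).rank = b := by
      rw [Matrix.rank_one, Fintype.card_fin]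
    calc b = (Vt * P * Ct).rank := by rw [hVPC, h1b]
      _ ≤ (Vt * P).rank := Matrix.rank_mul_le_left _ _
      _ ≤ P.rank := Matrix.rank_mul_le_right _ _
  have horthrank := rank_add_of_orth hQ1 hQ2 horth1 horth2
  have hsum : (E - P) + ((1 : Matrix (Fin r) (Fin r) ℂ) - E) = 1 - P := by abel
  rw [hsum] at horthrank
  have hcompl := rank_one_sub_add_rank_le hPP
  -- absorption
  have cP1 : P * D1 * E = P * D1 := by
    rw [Matrix.mul_assoc, ← h1, ← Matrix.mul_assoc, hPE]
  have cP2 : P * D2 * E = P * D2 := by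
    rw [Matrix.mul_assoc, ← h2, ← Matrix.mul_assoc, hPE]
  have hcomm1 : (1 - E) * D1 = D1 * (1 - E) := by
    rw [sub_mul, mul_sub, one_mul, mul_one, h1]
  have hcomm2 : (1 - E) * D2 = D2 * (1 - E) := by
    rw [sub_mul, mul_sub, one_mul, mul_one, h2]
  have hED1E : E * D1 * E = D1 * E := by rw [h1, Matrix.mul_assoc, hEE]
  have hED2E : E * D2 * E = D2 * E := by rw [h2, Matrix.mul_assoc, hEE]
  -- the A and B pieces
  obtain ⟨A1, hA1⟩ : ∃ M, M = Vt * D1 * Ct := ⟨_, rfl⟩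
  obtain ⟨A2, hA2⟩ : ∃ M, M = Vt * D2 * Ct := ⟨_, rfl⟩
  obtain ⟨B1, hB1⟩ : ∃ M, M = V * ((1 - E) * D1) * C := ⟨_, rfl⟩
  obtain ⟨B2, hB2⟩ : ∃ M, M = V * ((1 - E) * D2) * C := ⟨_, rfl⟩
  have hX1 : V * D1 * C = A1 + B1 := by
    have hs : D1 * E + D1 * (1 - E) = D1 := by rw [Matrix.mul_sub, Matrix.mul_one]; abel
    rw [hA1, hB1, hVt, hCt, hcomm1,
      show V * E * D1 * (E * C) = V * (E * D1 * E) * C by simp only [Matrix.mul_assoc],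
      hED1E, ← Matrix.add_mul, ← Matrix.mul_add, hs]
  have hX2 : V * D2 * C = A2 + B2 := by
    have hs : D2 * E + D2 * (1 - E) = D2 := by rw [Matrix.mul_sub, Matrix.mul_one]; abel
    rw [hA2, hB2, hVt, hCt, hcomm2,
      show V * E * D2 * (E * C) = V * (E * D2 * E) * C by simp only [Matrix.mul_assoc],
      hED2E, ← Matrix.add_mul, ← Matrix.mul_add, hs]
  -- commutator of A parts
  have e1 : A1 * A2 = Vt * (P * D1 * P * D2 * P) * Ct := by
    have i1 : A1 * A2 = Vt * (D1 * (Ct * Vt) * D2) * Ct := by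
      rw [hA1, hA2]; simp only [Matrix.mul_assoc]
    have i2 : Vt * (P * D1 * P * D2 * P) * Ct = Vt * (D1 * P * D2) * Ct := by
      rw [show Vt * (P * D1 * P * D2 * P) * Ct = (Vt * P) * (D1 * P * D2) * (P * Ct) by
        simp only [Matrix.mul_assoc], hVP, hPC]
    rw [i2, hP]
    exact i1
  have e2 : A2 * A1 = Vt * (P * D2 * P * D1 * P) * Ct := by
    have i1 : A2 * A1 = Vt * (D2 * (Ct * Vt) * D1) * Ct := by
      rw [hA1, hA2]; simp only [Matrix.mul_assoc]
    have i2 : Vt * (P * D2 * P * D1 * P) * Ct = Vt * (D2 * P * D1) * Ct := by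
      rw [show Vt * (P * D2 * P * D1 * P) * Ct = (Vt * P) * (D2 * P * D1) * (P * Ct) by
        simp only [Matrix.mul_assoc], hVP, hPC]
    rw [i2, hP]
    exact i1
  have mid : P * D1 * (P - E) * D2 * P - P * D2 * (P - E) * D1 * P
      = P * D1 * P * D2 * P - P * D2 * P * D1 * P := by
    have expand : P * D1 * (P - E) * D2 * P - P * D2 * (P - E) * D1 * P
        = (P * D1 * P * D2 * P - P * D2 * P * D1 * P)
          - ((P * D1 * E) * D2 * P - (P * D2 * E) * D1 * P) := by noncomm_ring
    have z : (P * D1 * E) * D2 * P - (P * D2 * E) * D1 * P = 0 := by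
      rw [cP1, cP2, show P * D1 * D2 * P = P * (D1 * D2) * P by simp only [Matrix.mul_assoc],
        show P * D2 * D1 * P = P * (D2 * D1) * P by simp only [Matrix.mul_assoc], h12, sub_self]
    rw [expand, z, sub_zero]
  have hA12 : A1 * A2 - A2 * A1
      = Vt * (P * D1 * (P - E) * D2 * P) * Ct - Vt * (P * D2 * (P - E) * D1 * P) * Ct := by
    rw [e1, e2, ← Matrix.sub_mul, ← Matrix.mul_sub, ← mid, Matrix.mul_sub, Matrix.sub_mul]
  -- full decomposition
  have hdecomp : (V * D1 * C) * (V * D2 * C) - (V * D2 * C) * (V * D1 * C)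
      = (A1 * A2 - A2 * A1) + (A1 * B2 - A2 * B1)
        + (B1 * (A2 + B2) - B2 * (A1 + B1)) := by
    rw [hX1, hX2]; noncomm_ring
  -- rank bounds
  have hrk1 : (Vt * (P * D1 * (P - E) * D2 * P) * Ct).rank ≤ (E - P).rank := by
    rw [show Vt * (P * D1 * (P - E) * D2 * P) * Ct
      = (Vt * (P * D1)) * ((P - E) * (D2 * (P * Ct))) by simp only [Matrix.mul_assoc]]
    calc ((Vt * (P * D1)) * ((P - E) * (D2 * (P * Ct)))).rank
        ≤ ((P - E) * (D2 * (P * Ct))).rank := Matrix.rank_mul_le_right _ _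
      _ ≤ (P - E).rank := Matrix.rank_mul_le_left _ _
      _ = (E - P).rank := by rw [show P - E = -(E - P) by abel, rank_neg]
  have hrk2 : (Vt * (P * D2 * (P - E) * D1 * P) * Ct).rank ≤ (E - P).rank := by
    rw [show Vt * (P * D2 * (P - E) * D1 * P) * Ct
      = (Vt * (P * D2)) * ((P - E) * (D1 * (P * Ct))) by simp only [Matrix.mul_assoc]]
    calc ((Vt * (P * D2)) * ((P - E) * (D1 * (P * Ct)))).rank
        ≤ ((P - E) * (D1 * (P * Ct))).rank := Matrix.rank_mul_le_right _ _
      _ ≤ (P - E).rank := Matrix.rank_mul_le_left _ _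
      _ = (E - P).rank := by rw [show P - E = -(E - P) by abel, rank_neg]
  have hrk3 : (A1 * B2 - A2 * B1).rank ≤ ((1 : Matrix (Fin r) (Fin r) ℂ) - E).rank := by
    have e : A1 * B2 - A2 * B1
        = (A1 * (V * D2) - A2 * (V * D1)) * ((1 - E) * C) := by
      rw [hB1, hB2, hcomm1, hcomm2]
      simp only [Matrix.sub_mul, Matrix.mul_assoc]
    rw [e]
    calc ((A1 * (V * D2) - A2 * (V * D1)) * ((1 - E) * C)).rank
        ≤ ((1 - E) * C).rank := Matrix.rank_mul_le_right _ _
      _ ≤ ((1 : Matrix (Fin r) (Fin r) ℂ) - E).rank := Matrix.rank_mul_le_left _ _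
  have hrk4 : (B1 * (A2 + B2) - B2 * (A1 + B1)).rank
      ≤ ((1 : Matrix (Fin r) (Fin r) ℂ) - E).rank := by
    have f1 : B1 = (V * (1 - E)) * (D1 * C) := by rw [hB1]; simp only [Matrix.mul_assoc]
    have f2 : B2 = (V * (1 - E)) * (D2 * C) := by rw [hB2]; simp only [Matrix.mul_assoc]
    have e : B1 * (A2 + B2) - B2 * (A1 + B1)
        = (V * (1 - E)) * ((D1 * C) * (A2 + B2) - (D2 * C) * (A1 + B1)) := by
      rw [Matrix.mul_sub, f1, f2]
      simp only [Matrix.mul_assoc]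
    rw [e]
    calc ((V * (1 - E)) * ((D1 * C) * (A2 + B2) - (D2 * C) * (A1 + B1))).rank
        ≤ (V * (1 - E)).rank := Matrix.rank_mul_le_left _ _
      _ ≤ ((1 : Matrix (Fin r) (Fin r) ℂ) - E).rank := Matrix.rank_mul_le_right _ _
  -- assemble
  have s1 : (A1 * A2 - A2 * A1).rank ≤ (E - P).rank + (E - P).rank := by
    rw [hA12]
    exact le_trans (rank_sub_le _ _) (add_le_add hrk1 hrk2)
  have s2 := rank_add_le (A1 * A2 - A2 * A1) (A1 * B2 - A2 * B1)
  have s3 := rank_add_le ((A1 * A2 - A2 * A1) + (A1 * B2 - A2 * B1))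
    (B1 * (A2 + B2) - B2 * (A1 + B1))
  rw [hdecomp]
  omega


variable {n m r b : ℕ}

/-- Exact-rank form of Strassen's bound, for slices `V * diagonal dᵢ * C`. -/
lemma exact_bound {b r : ℕ} (V : Matrix (Fin b) (Fin r) ℂ) (C : Matrix (Fin r) (Fin b) ℂ)
    (d0 d1 d2 : Fin r → ℂ) (h : IsUnit (V * Matrix.diagonal d0 * C).det) :
    (((V * Matrix.diagonal d1 * C) * (V * Matrix.diagonal d0 * C)⁻¹)
        * ((V * Matrix.diagonal d2 * C) * (V * Matrix.diagonal d0 * C)⁻¹)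
      - ((V * Matrix.diagonal d2 * C) * (V * Matrix.diagonal d0 * C)⁻¹)
        * ((V * Matrix.diagonal d1 * C) * (V * Matrix.diagonal d0 * C)⁻¹)).rank
      + 2 * b ≤ 2 * r := by
  classical
  set G0 := V * Matrix.diagonal d0 * C with hG0
  set C' := C * G0⁻¹ with hC'
  have hX : ∀ d : Fin r → ℂ,
      (V * Matrix.diagonal d * C) * G0⁻¹ = V * Matrix.diagonal d * C' := fun d => by
    rw [hC', Matrix.mul_assoc]
  have hnorm0 : V * Matrix.diagonal d0 * C' = 1 := by
    rw [← hX d0, ← hG0, Matrix.mul_nonsing_inv _ h]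
  -- rescaling
  set c : Fin r → ℂ := fun s => if d0 s = 0 then 1 else d0 s with hc
  set e : Fin r → ℂ := fun s => if d0 s = 0 then 0 else 1 with he
  have hcne : ∀ s, c s ≠ 0 := by
    intro s; rw [hc]; by_cases hs : d0 s = 0 <;> simp [hs]
  have hce : ∀ s, c s * e s = d0 s := by
    intro s; rw [hc, he]; by_cases hs : d0 s = 0 <;> simp [hs]
  have hcd : ∀ (d : Fin r → ℂ) (s : Fin r), c s * (d s / c s) = d s := by
    intro d s; rw [mul_comm, div_mul_cancel₀ _ (hcne s)]
  have hdiag : ∀ (d : Fin r → ℂ),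
      (V * Matrix.diagonal c) * Matrix.diagonal (fun s => d s / c s) * C'
        = V * Matrix.diagonal d * C' := by
    intro d
    rw [show (V * Matrix.diagonal c) * Matrix.diagonal (fun s => d s / c s) * C'
        = V * (Matrix.diagonal c * Matrix.diagonal (fun s => d s / c s)) * C' by
      simp only [Matrix.mul_assoc], Matrix.diagonal_mul_diagonal]
    congr 2
    exact congrArg _ (funext fun s => hcd d s)
  have hdiagE : Matrix.diagonal c * Matrix.diagonal e = Matrix.diagonal d0 := by
    rw [Matrix.diagonal_mul_diagonal]
    exact congrArg _ (funext hce)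
  have hnorm' : (V * Matrix.diagonal c) * Matrix.diagonal e * C' = 1 := by
    rw [show (V * Matrix.diagonal c) * Matrix.diagonal e * C'
        = V * (Matrix.diagonal c * Matrix.diagonal e) * C' by simp only [Matrix.mul_assoc],
      hdiagE, hnorm0]
  have hEE : Matrix.diagonal e * Matrix.diagonal e = Matrix.diagonal e := by
    rw [Matrix.diagonal_mul_diagonal]
    refine congrArg _ (funext fun s => ?_)
    rw [he]; by_cases hs : d0 s = 0 <;> simp [hs]
  have hcomm : ∀ (f g : Fin r → ℂ),
      Matrix.diagonal f * Matrix.diagonal g = Matrix.diagonal g * Matrix.diagonal f := by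
    intro f g
    rw [Matrix.diagonal_mul_diagonal, Matrix.diagonal_mul_diagonal]
    exact congrArg _ (funext fun s => mul_comm _ _)
  have hmain := core (V * Matrix.diagonal c) C' (Matrix.diagonal e)
    (Matrix.diagonal (fun s => d1 s / c s)) (Matrix.diagonal (fun s => d2 s / c s))
    hEE (hcomm _ _) (hcomm _ _) (hcomm _ _) hnorm'
  rw [hdiag d1, hdiag d2, ← hX d1, ← hX d2] at hmain
  exact hmain

/-- The rank of the commutator built from the inverse equals that built from the adjugate. -/
lemma comm_rank_eq {b : ℕ} (G0 G1 G2 : Matrix (Fin b) (Fin b) ℂ) (h : IsUnit G0.det) :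
    ((G1 * G0⁻¹) * (G2 * G0⁻¹) - (G2 * G0⁻¹) * (G1 * G0⁻¹)).rank
      = (G1 * G0.adjugate * G2 - G2 * G0.adjugate * G1).rank := by
  have rank_smul : ∀ {c : ℂ}, c ≠ 0 → ∀ M : Matrix (Fin b) (Fin b) ℂ, (c • M).rank = M.rank := by
    intro c hc M
    have h1 : c • M = (c • (1 : Matrix (Fin b) (Fin b) ℂ)) * M := by
      rw [Matrix.smul_mul, Matrix.one_mul]
    have h2 : IsUnit ((c • (1 : Matrix (Fin b) (Fin b) ℂ)).det) := by
      rw [Matrix.det_smul, Matrix.det_one, mul_one]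
      exact isUnit_iff_ne_zero.mpr (pow_ne_zero _ hc)
    rw [h1, Matrix.rank_mul_eq_right_of_isUnit_det _ _ h2]
  have hdetinv : IsUnit (G0⁻¹).det := by
    rw [Matrix.det_nonsing_inv]
    exact isUnit_ringInverse.mpr h
  -- step 1 : commutator = M * G0⁻¹ where M is the "inverse" middle form
  have step1 : (G1 * G0⁻¹) * (G2 * G0⁻¹) - (G2 * G0⁻¹) * (G1 * G0⁻¹)
      = (G1 * G0⁻¹ * G2 - G2 * G0⁻¹ * G1) * G0⁻¹ := by
    rw [Matrix.sub_mul]; simp only [Matrix.mul_assoc]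
  -- step 2 : adjugate middle form = det • inverse middle form
  have hadj : G0.adjugate = G0.det • G0⁻¹ := by
    rw [Matrix.inv_def, smul_smul, Ring.mul_inverse_cancel _ h, one_smul]
  have step2 : G1 * G0.adjugate * G2 - G2 * G0.adjugate * G1
      = G0.det • (G1 * G0⁻¹ * G2 - G2 * G0⁻¹ * G1) := by
    rw [hadj]
    simp only [Matrix.mul_smul, Matrix.smul_mul, smul_sub]
  rw [step1, step2, rank_smul (h.ne_zero) _,
    Matrix.rank_mul_eq_left_of_isUnit_det _ _ hdetinv]



/-- A full-rank factorization witness: `L * (M * R) = 1` with `1` of size `M.rank`. -/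
lemma exists_left_right {n : ℕ} (M : Matrix (Fin n) (Fin n) ℂ) :
    ∃ L : Matrix (Fin M.rank) (Fin n) ℂ, ∃ R : Matrix (Fin n) (Fin M.rank) ℂ,
      L * (M * R) = 1 := by
  classical
  have hdim : Module.finrank ℂ (LinearMap.range M.mulVecLin) = M.rank := rfl
  let bas : Module.Basis (Fin M.rank) ℂ (LinearMap.range M.mulVecLin) :=
    Module.finBasisOfFinrankEq ℂ _ hdim
  have hmem : ∀ i, ((bas i : Fin n → ℂ)) ∈ LinearMap.range M.mulVecLin := fun i => (bas i).2
  choose v hv using fun i => LinearMap.mem_range.mp (hmem i)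
  let R : Matrix (Fin n) (Fin M.rank) ℂ := Matrix.of fun j i => v i j
  have hMR : ∀ x : Fin M.rank → ℂ,
      (M * R).mulVec x = ∑ i, x i • ((bas i : Fin n → ℂ)) := by
    intro x
    have h0 : (M * R).mulVec x = M.mulVecLin (R.mulVec x) := by
      rw [Matrix.mulVecLin_apply, Matrix.mulVec_mulVec]
    have hRx : R.mulVec x = ∑ i, x i • v i := by
      funext l
      simp [R, Matrix.mulVec, dotProduct, Finset.sum_apply, mul_comm]
    rw [h0, hRx, map_sum]
    refine Finset.sum_congr rfl fun i _ => ?_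
    rw [LinearMap.map_smul, hv i]
  have hinj : LinearMap.ker (M * R).mulVecLin = ⊥ := by
    rw [Submodule.eq_bot_iff]
    intro x hx
    have hx' : (M * R).mulVec x = 0 := hx
    rw [hMR] at hx'
    have hsub : (LinearMap.range M.mulVecLin).subtype (∑ i, x i • bas i) = 0 := by
      rw [map_sum]
      simp only [LinearMap.map_smul]
      exact hx'
    have hzero : (∑ i, x i • bas i) = 0 :=
      (LinearMap.range M.mulVecLin).injective_subtype (by simpa using hsub)
    have hli := bas.linearIndependent
    rw [Fintype.linearIndependent_iff] at hli
    funext i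
    exact hli x hzero i
  obtain ⟨g, hg⟩ := LinearMap.exists_leftInverse_of_injective _ hinj
  refine ⟨LinearMap.toMatrix' g, R, ?_⟩
  have : LinearMap.toMatrix' g * (M * R) = LinearMap.toMatrix' (g ∘ₗ (M * R).mulVecLin) := by
    rw [LinearMap.toMatrix'_comp, ← Matrix.toLin'_apply', LinearMap.toMatrix'_toLin']
  rw [this, hg, LinearMap.toMatrix'_id]

/-- Slices of a sum of simple tensors factor as `V * diagonal * W`. -/
lemma phi_decomp {ι : Type} [Fintype ι] {b r : ℕ} (α : ι → ℂ)
    (u : Fin r → ι → ℂ) (v w : Fin r → Fin b → ℂ) :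
    (Matrix.of fun j k => ∑ i : ι,
        α i * (∑ s : Fin r, simpleTensor (u s) (v s) (w s)) i j k)
      = (Matrix.of fun j s => v s j)
          * Matrix.diagonal (fun s => ∑ i : ι, α i * u s i)
          * (Matrix.of fun s k => w s k) := by
  ext j k
  have happ : ∀ i j k, (∑ s : Fin r, simpleTensor (u s) (v s) (w s)) i j k
      = ∑ s : Fin r, u s i * v s j * w s k := by
    intro i j k
    simp [simpleTensor, Finset.sum_apply]
  have hL : (Matrix.of fun j k => ∑ i : ι,
      α i * (∑ s : Fin r, simpleTensor (u s) (v s) (w s)) i j k) j k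
      = ∑ s : Fin r, ∑ i : ι, α i * u s i * v s j * w s k := by
    simp only [Matrix.of_apply]
    rw [Finset.sum_congr rfl fun i (_ : i ∈ Finset.univ) => by rw [happ i j k]]
    rw [Finset.sum_congr rfl fun i (_ : i ∈ Finset.univ) => Finset.mul_sum _ _ (α i)]
    rw [Finset.sum_comm]
    refine Finset.sum_congr rfl fun s _ => ?_
    refine Finset.sum_congr rfl fun i _ => ?_
    ring
  have hR : ((Matrix.of fun j s => v s j)
      * Matrix.diagonal (fun s => ∑ i : ι, α i * u s i)
      * (Matrix.of fun s k => w s k)) j k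
      = ∑ s : Fin r, ∑ i : ι, α i * u s i * v s j * w s k := by
    rw [Matrix.mul_apply]
    refine Finset.sum_congr rfl fun s _ => ?_
    rw [Matrix.mul_diagonal, Matrix.of_apply, Matrix.of_apply]
    rw [Finset.mul_sum, Finset.sum_mul]
    refine Finset.sum_congr rfl fun i _ => ?_
    ring
  rw [hL, hR]

/-- Every tensor with finite index types has finite rank. -/
lemma exists_finite_rank {ι₁ ι₂ ι₃ : Type} [Fintype ι₁] [Fintype ι₂] [Fintype ι₃]
    (T : ι₁ → ι₂ → ι₃ → ℂ) :
    ∃ (N : ℕ) (u : Fin N → ι₁ → ℂ) (v : Fin N → ι₂ → ℂ) (w : Fin N → ι₃ → ℂ),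
      T = ∑ s : Fin N, simpleTensor (u s) (v s) (w s) := by
  classical
  refine ⟨Fintype.card (ι₁ × ι₂ × ι₃), ?_⟩
  set e := (Fintype.equivFin (ι₁ × ι₂ × ι₃)).symm with he
  refine ⟨fun s i => if i = (e s).1 then T (e s).1 (e s).2.1 (e s).2.2 else 0,
          fun s j => if j = (e s).2.1 then 1 else 0,
          fun s k => if k = (e s).2.2 then 1 else 0, ?_⟩
  funext i j k
  have hsum : (∑ s, simpleTensor
      (fun i => if i = (e s).1 then T (e s).1 (e s).2.1 (e s).2.2 else 0)
      (fun j => if j = (e s).2.1 then 1 else 0)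
      (fun k => if k = (e s).2.2 then 1 else 0)) i j k
      = ∑ s, (if i = (e s).1 then T (e s).1 (e s).2.1 (e s).2.2 else 0)
          * (if j = (e s).2.1 then 1 else 0) * (if k = (e s).2.2 then 1 else 0) := by
    simp [simpleTensor, Finset.sum_apply]
  rw [hsum]
  have := Equiv.sum_comp e (fun p : ι₁ × ι₂ × ι₃ =>
    (if i = p.1 then T p.1 p.2.1 p.2.2 else 0)
      * (if j = p.2.1 then 1 else 0) * (if k = p.2.2 then 1 else 0))
  rw [this]
  have hpt : ∀ p : ι₁ × ι₂ × ι₃,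
      (if i = p.1 then T p.1 p.2.1 p.2.2 else 0)
        * (if j = p.2.1 then 1 else 0) * (if k = p.2.2 then 1 else 0)
      = if (i, j, k) = p then T i j k else 0 := by
    rintro ⟨x, y, z⟩
    by_cases h1 : i = x <;> by_cases h2 : j = y <;> by_cases h3 : k = z <;>
      simp [Prod.ext_iff, h1, h2, h3] <;> subst h1 <;> try subst h2 <;> try subst h3
    all_goals simp_all
  rw [Finset.sum_congr rfl fun p _ => hpt p]
  rw [Finset.sum_ite_eq Finset.univ (i, j, k) (fun _ => T i j k)]
  simp

end StrassenAux

open Matrix in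
/-- Strassen's commutator lower bound: if `T ∈ A ⊗ ℂ^b ⊗ ℂ^b` (with `A = ℂ^ι`), regarded via
contraction as a linear map `φ : A* → Mat_{b×b}(ℂ)`, admits `α0` with `φ(α0)` invertible, then
for all `α1, α2`, setting `X1 = φ(α1)·φ(α0)⁻¹` and `X2 = φ(α2)·φ(α0)⁻¹`,
`R̲(T) ≥ b + (1/2)·rank(X1 X2 − X2 X1)`. -/
theorem strassen_commutator_lower_bound {ι : Type} [Fintype ι] (b : ℕ) (hb : 1 ≤ b)
    (T : ι → Fin b → Fin b → ℂ)
    (φ : (ι → ℂ) → Matrix (Fin b) (Fin b) ℂ)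
    (hφ : ∀ α : ι → ℂ, φ α = Matrix.of fun j k => ∑ i : ι, α i * T i j k)
    (α0 : ι → ℂ) (h0 : IsUnit (φ α0)) :
    ∀ α1 α2 : ι → ℂ,
      (b : ℝ) +
        (((φ α1 * (φ α0)⁻¹) * (φ α2 * (φ α0)⁻¹) -
            (φ α2 * (φ α0)⁻¹) * (φ α1 * (φ α0)⁻¹)).rank : ℝ) / 2 ≤
        (borderRank T : ℝ) := by
  intro α1 α2
  classical
  -- the slice map, as a function of the tensor
  set Φ : (ι → ℂ) → (ι → Fin b → Fin b → ℂ) → Matrix (Fin b) (Fin b) ℂ :=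
    fun α T' => Matrix.of fun j k => ∑ i : ι, α i * T' i j k with hΦdef
  have hφΦ : ∀ α, φ α = Φ α T := fun α => hφ α
  have hcont : ∀ α, Continuous (fun T' : ι → Fin b → Fin b → ℂ => Φ α T') := by
    intro α
    apply continuous_matrix
    intro j k
    apply continuous_finset_sum
    intro i _
    exact continuous_const.mul
      ((continuous_apply k).comp ((continuous_apply j).comp (continuous_apply i)))
  -- the adjugate-commutator, polynomial in the tensor
  set Kh : (ι → Fin b → Fin b → ℂ) → Matrix (Fin b) (Fin b) ℂ :=
    fun T' => Φ α1 T' * (Φ α0 T').adjugate * Φ α2 T'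
      - Φ α2 T' * (Φ α0 T').adjugate * Φ α1 T' with hKhdef
  have hKhcont : Continuous Kh :=
    (((hcont α1).matrix_mul (hcont α0).matrix_adjugate).matrix_mul (hcont α2)).sub
      ((((hcont α2).matrix_mul (hcont α0).matrix_adjugate)).matrix_mul (hcont α1))
  obtain ⟨L, R, hLR⟩ := StrassenAux.exists_left_right (Kh T)
  set f : (ι → Fin b → Fin b → ℂ) → ℂ :=
    fun T' => (L * (Kh T' * R)).det * (Φ α0 T').det with hfdef
  have hfc : Continuous f :=
    ((continuous_const.matrix_mul (hKhcont.matrix_mul continuous_const)).matrix_det).mul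
      ((hcont α0).matrix_det)
  have hdet0 : IsUnit (Φ α0 T).det := by
    rw [← hφΦ]; exact (Matrix.isUnit_iff_isUnit_det _).mp h0
  have hfT : f T ≠ 0 := by
    rw [hfdef]
    simp only [hLR, Matrix.det_one, one_mul]
    exact hdet0.ne_zero
  have hU : IsOpen (f ⁻¹' {(0 : ℂ)}ᶜ) := (isOpen_compl_singleton).preimage hfc
  have hTU : T ∈ f ⁻¹' {(0 : ℂ)}ᶜ := hfT
  -- border rank membership
  have hne : {r : ℕ | T ∈ closure (rankAtMost ι (Fin b) (Fin b) r)}.Nonempty := by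
    obtain ⟨N, u, v, w, hT⟩ := StrassenAux.exists_finite_rank T
    exact ⟨N, subset_closure ⟨u, v, w, hT⟩⟩
  have hmem : T ∈ closure (rankAtMost ι (Fin b) (Fin b) (borderRank T)) := Nat.sInf_mem hne
  obtain ⟨T', hT'⟩ := mem_closure_iff.mp hmem _ hU hTU
  obtain ⟨u, v, w, hT'eq⟩ := hT'.2
  have hf' : (L * (Kh T' * R)).det ≠ 0 ∧ (Φ α0 T').det ≠ 0 := by
    have h := hT'.1
    simp only [Set.mem_preimage, Set.mem_compl_iff, Set.mem_singleton_iff] at h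
    exact mul_ne_zero_iff.mp h
  -- decomposition of the slices of T'
  set d0 : Fin (borderRank T) → ℂ := fun s => ∑ i : ι, α0 i * u s i with hd0
  set d1 : Fin (borderRank T) → ℂ := fun s => ∑ i : ι, α1 i * u s i with hd1
  set d2 : Fin (borderRank T) → ℂ := fun s => ∑ i : ι, α2 i * u s i with hd2
  set V : Matrix (Fin b) (Fin (borderRank T)) ℂ := Matrix.of fun j s => v s j with hV
  set W : Matrix (Fin (borderRank T)) (Fin b) ℂ := Matrix.of fun s k => w s k with hW
  have hG : ∀ α, Φ α T' = V * Matrix.diagonal (fun s => ∑ i : ι, α i * u s i) * W := by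
    intro α
    rw [hΦdef]
    show (Matrix.of fun j k => ∑ i : ι, α i * T' i j k) = _
    rw [show (Matrix.of fun j k => ∑ i : ι, α i * T' i j k)
        = (Matrix.of fun j k => ∑ i : ι,
            α i * (∑ s, simpleTensor (u s) (v s) (w s)) i j k) by rw [← hT'eq]]
    exact StrassenAux.phi_decomp α u v w
  have hdet0' : IsUnit (V * Matrix.diagonal d0 * W).det := by
    rw [hd0, ← hG α0]
    exact isUnit_iff_ne_zero.mpr hf'.2
  have hexact := StrassenAux.exact_bound V W d0 d1 d2 hdet0'
  have hconv := StrassenAux.comm_rank_eq (V * Matrix.diagonal d0 * W) (V * Matrix.diagonal d1 * W)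
    (V * Matrix.diagonal d2 * W) hdet0'
  have hKhT' : Kh T' = (V * Matrix.diagonal d1 * W) * (V * Matrix.diagonal d0 * W).adjugate
        * (V * Matrix.diagonal d2 * W)
      - (V * Matrix.diagonal d2 * W) * (V * Matrix.diagonal d0 * W).adjugate
        * (V * Matrix.diagonal d1 * W) := by
    rw [hKhdef]
    show Φ α1 T' * (Φ α0 T').adjugate * Φ α2 T'
      - Φ α2 T' * (Φ α0 T').adjugate * Φ α1 T' = _
    rw [hG α1, hG α0, hG α2, hd0, hd1, hd2]
  have hKhT'rank : (Kh T').rank + 2 * b ≤ 2 * borderRank T := by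
    rw [hKhT', ← hconv]
    exact hexact
  -- lower semicontinuity step
  have hρle : (Kh T).rank ≤ (Kh T').rank := by
    have hunit : IsUnit (L * (Kh T' * R)) :=
      (Matrix.isUnit_iff_isUnit_det _).mpr (isUnit_iff_ne_zero.mpr hf'.1)
    have h1 : (L * (Kh T' * R)).rank = (Kh T).rank := by
      rw [Matrix.rank_of_isUnit _ hunit, Fintype.card_fin]
    calc (Kh T).rank = (L * (Kh T' * R)).rank := h1.symm
      _ ≤ (Kh T' * R).rank := Matrix.rank_mul_le_right _ _
      _ ≤ (Kh T').rank := Matrix.rank_mul_le_left _ _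
  -- identify the rank in the goal
  have hgoalrank : ((φ α1 * (φ α0)⁻¹) * (φ α2 * (φ α0)⁻¹)
      - (φ α2 * (φ α0)⁻¹) * (φ α1 * (φ α0)⁻¹)).rank = (Kh T).rank := by
    rw [hφΦ α1, hφΦ α2, hφΦ α0]
    exact StrassenAux.comm_rank_eq (Φ α0 T) (Φ α1 T) (Φ α2 T) hdet0
  rw [hgoalrank]
  have hfinal : (Kh T).rank + 2 * b ≤ 2 * borderRank T := by omega
  have hcast : ((Kh T).rank : ℝ) + 2 * (b : ℝ) ≤ 2 * (borderRank T : ℝ) := by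
    exact_mod_cast hfinal
  linarith
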